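/- arXiv:2403.02116 — 3 statements merged into one kernel-verified Lean document; each statement's English description precedes it below -/
import Mathlib

section
/- Let (U, R) be jointly distributed random variables where U takes values in {0,1} and R takes values in a countable space Z, and suppose the conditional Shannon entropy H(U | R) (in bits) is strictly positive. Then for every function A : Z → {0,1}, the probability of correct inference is bounded as Pr(A(R) = U) ≤ 1 − H(U | R) / (2 · log₂(6 / H(U | R))). -/
open MeasureTheory Real


-- cross-entropy ≥ entropy (binary, natural log)
lemma crossEnt (x p : ℝ) (hx0 : 0 ≤ x) (hx1 : x ≤ 1) (hp0 : 0 < p) (hp1 : p < 1) :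
    x * log p + (1 - x) * log (1 - p) ≤ x * log x + (1 - x) * log (1 - x) := by
  have h1 : x * log p - x * log x ≤ p - x := by
    rcases eq_or_lt_of_le hx0 with h | h
    · simp [← h]; positivity
    · have := Real.log_le_sub_one_of_pos (x := p / x) (by positivity)
      rw [Real.log_div (ne_of_gt hp0) (ne_of_gt h)] at this
      have := mul_le_mul_of_nonneg_left this (le_of_lt h)
      calc x * log p - x * log x = x * (log p - log x) := by ring
        _ ≤ x * (p / x - 1) := this
        _ = p - x := by field_simp
  have h2 : (1 - x) * log (1 - p) - (1 - x) * log (1 - x) ≤ x - p := by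
    rcases eq_or_lt_of_le hx1 with h | h
    · simp [h]; linarith
    · have hx1' : 0 < 1 - x := by linarith
      have := Real.log_le_sub_one_of_pos (x := (1 - p) / (1 - x)) (div_pos (by linarith) hx1')
      rw [Real.log_div (by linarith) (ne_of_gt hx1')] at this
      have := mul_le_mul_of_nonneg_left this (le_of_lt hx1')
      calc (1 - x) * log (1 - p) - (1 - x) * log (1 - x)
          = (1 - x) * (log (1 - p) - log (1 - x)) := by ring
        _ ≤ (1 - x) * ((1 - p) / (1 - x) - 1) := this
        _ = x - p := by field_simp; ring
  linarith

-- tangent-line / per-point bound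
lemma perPoint (a b q p : ℝ) (ha : 0 ≤ a) (hb : 0 ≤ b) (hq : q = a + b)
    (hp0 : 0 < p) (hp1 : p < 1) :
    -(a * log (a / q) + b * log (b / q)) ≤
      q * (-(p * log p + (1 - p) * log (1 - p))) + (log (1 - p) - log p) * (b - q * p) := by
  rcases eq_or_lt_of_le (by linarith : (0:ℝ) ≤ q) with h | hq0
  · have ha0 : a = 0 := by linarith
    have hb0 : b = 0 := by linarith
    have hq0 : q = 0 := h.symm
    subst ha0; subst hq0
    have hb0 : b = 0 := by linarith
    subst hb0
    norm_num
  · set x := b / q with hxdef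
    have hx0 : 0 ≤ x := by positivity
    have hx1 : x ≤ 1 := by rw [div_le_one hq0]; linarith
    have hb' : b = q * x := by rw [hxdef]; field_simp
    have ha' : a = q * (1 - x) := by rw [hxdef]; field_simp; linarith
    have haq : a / q = 1 - x := by rw [ha']; field_simp
    have hbq : b / q = x := rfl
    have key := crossEnt x p hx0 hx1 hp0 hp1
    have := mul_le_mul_of_nonneg_left key (le_of_lt hq0)
    calc -(a * log (a / q) + b * log (b / q))
        = -(q * ((1 - x) * log (1 - x) + x * log x)) := by rw [haq, hbq, ha', hb']; ring
      _ ≤ -(q * ((1 - x) * log (1 - p) + x * log p)) := by nlinarith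
      _ = q * (-(p * log p + (1 - p) * log (1 - p))) + (log (1 - p) - log p) * (b - q * p) := by
          rw [hb']; ring

lemma log_six_ge_one : 1 ≤ Real.log 6 := by
  rw [Real.le_log_iff_exp_le (by norm_num)]
  have := Real.exp_one_lt_d9
  linarith

lemma ent_le_log_two (E : ℝ) : -(E * log E + (1 - E) * log (1 - E)) ≤ Real.log 2 := by
  have h := Real.binEntropy_le_log_two (p := E)
  rw [Real.binEntropy, Real.log_inv, Real.log_inv] at h
  linarith

lemma ent_le_mul (E : ℝ) (hE0 : 0 < E) (hE1 : E < 1) :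
    -(E * log E + (1 - E) * log (1 - E)) ≤ E * log (6 / E) := by
  have h1E : (0:ℝ) < 1 - E := by linarith
  have h1 : log ((1 - E)⁻¹) ≤ (1 - E)⁻¹ - 1 := Real.log_le_sub_one_of_pos (by positivity)
  rw [Real.log_inv] at h1
  have h2 : (1 - E) * (-log (1 - E)) ≤ E := by
    have := mul_le_mul_of_nonneg_left h1 (le_of_lt h1E)
    calc (1 - E) * (-log (1 - E)) ≤ (1 - E) * ((1 - E)⁻¹ - 1) := this
      _ = E := by field_simp; ring
  have h3 : E ≤ E * log 6 := by nlinarith [log_six_ge_one]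
  rw [Real.log_div (by norm_num) (ne_of_gt hE0)]
  nlinarith

-- antitonicity of x log x on (0, 1/e]
lemma negmul_mono (a b : ℝ) (ha : 0 < a) (hab : a ≤ b) (hb : b ≤ Real.exp (-1)) :
    a * (-log a) ≤ b * (-log b) := by
  have hb0 : 0 < b := lt_of_lt_of_le ha hab
  have h1 : -log b ≥ 1 := by
    have : log b ≤ log (Real.exp (-1)) := Real.log_le_log hb0 hb
    rw [Real.log_exp] at this; linarith
  have h2 : log (b / a) ≤ b / a - 1 := Real.log_le_sub_one_of_pos (by positivity)
  rw [Real.log_div (ne_of_gt hb0) (ne_of_gt ha)] at h2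
  have h3 : a * (log b - log a) ≤ b - a := by
    have := mul_le_mul_of_nonneg_left h2 (le_of_lt ha)
    calc a * (log b - log a) ≤ a * (b / a - 1) := this
      _ = b - a := by field_simp
  nlinarith

lemma inversion (H E : ℝ) (hH0 : 0 < H) (hH1 : H ≤ 1) (hE0 : 0 < E)
    (hbound : H * Real.log 2 ≤ E * log (6 / E)) :
    H / (2 * Real.logb 2 (6 / H)) ≤ E := by
  have l2 : (0:ℝ) < Real.log 2 := Real.log_pos (by norm_num)
  set LH := Real.log (6 / H) with hLH
  have hlog4 : Real.log 4 = 2 * Real.log 2 := by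
    rw [show (4:ℝ) = 2 ^ 2 by norm_num, Real.log_pow]; norm_num
  have hLH6 : Real.log 6 ≤ LH := by
    apply Real.log_le_log (by norm_num)
    rw [le_div_iff₀ hH0]; linarith
  have hl6 := log_six_ge_one
  have hLH1 : 1 ≤ LH := le_trans hl6 hLH6
  have hLH2 : 2 * Real.log 2 < LH := by
    rw [← hlog4]
    exact lt_of_lt_of_le (Real.log_lt_log (by norm_num) (by norm_num)) hLH6
  have hlogb : Real.logb 2 (6 / H) = LH / Real.log 2 := rfl
  rw [hlogb]
  set p0 := H / (2 * (LH / Real.log 2)) with hp0def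
  have hden : (0:ℝ) < 2 * (LH / Real.log 2) := by positivity
  have hp0pos : 0 < p0 := div_pos hH0 hden
  have hp0eq : p0 = H * Real.log 2 / (2 * LH) := by
    rw [hp0def]; field_simp
  by_contra hcon
  push_neg at hcon
  have hp0q : p0 ≤ 1 / 4 := by
    rw [hp0eq, div_le_div_iff₀ (by positivity) (by norm_num)]
    nlinarith
  have hexp : (1:ℝ) / 4 ≤ Real.exp (-1) := by
    have h9 := Real.exp_one_lt_d9
    have h4 : Real.exp 1 ≤ 4 := by linarith
    rw [Real.exp_neg, ← one_div, le_div_iff₀ (Real.exp_pos 1)]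
    nlinarith
  have hp0e : p0 ≤ Real.exp (-1) := le_trans hp0q hexp
  have hmono : E * log (6 / E) ≤ p0 * log (6 / p0) := by
    rw [Real.log_div (by norm_num) (ne_of_gt hE0),
        Real.log_div (by norm_num) (ne_of_gt hp0pos)]
    have h1 : E * (-log E) ≤ p0 * (-log p0) := negmul_mono E p0 hE0 (le_of_lt hcon) hp0e
    have h2 : E * Real.log 6 ≤ p0 * Real.log 6 :=
      mul_le_mul_of_nonneg_right (le_of_lt hcon) (le_trans (by norm_num) hl6)
    nlinarith
  have hHlogH : H - 1 ≤ H * log H := by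
    rcases eq_or_lt_of_le hH1 with h | h
    · rw [h]; simp
    · have hinv : -log H ≤ H⁻¹ - 1 := by
        have := Real.log_le_sub_one_of_pos (x := H⁻¹) (by positivity)
        rwa [Real.log_inv] at this
      have h2 := mul_le_mul_of_nonneg_left hinv (le_of_lt hH0)
      have h3 : H * (H⁻¹ - 1) = 1 - H := by field_simp
      nlinarith
  have hHL3 : H * LH < 3 * Real.log 2 := by
    have hLHeq : LH = Real.log 6 - Real.log H := by
      rw [hLH, Real.log_div (by norm_num) (ne_of_gt hH0)]
    have hlog8 : Real.log 8 = 3 * Real.log 2 := by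
      rw [show (8:ℝ) = 2 ^ 3 by norm_num, Real.log_pow]; norm_num
    have h68 : Real.log 6 < Real.log 8 := Real.log_lt_log (by norm_num) (by norm_num)
    have hexpand : H * LH = H * Real.log 6 - H * Real.log H := by rw [hLHeq]; ring
    have hprod : 0 ≤ (1 - H) * (Real.log 6 - 1) :=
      mul_nonneg (by linarith) (by linarith)
    nlinarith
  have hstrict : p0 * log (6 / p0) < p0 * (2 * LH) := by
    apply (mul_lt_mul_iff_right₀ hp0pos).mpr
    have hsq : Real.log ((6 / H) ^ 2) = 2 * LH := by rw [Real.log_pow]; try norm_num [hLH]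
    rw [← hsq]
    apply Real.log_lt_log (by positivity)
    rw [hp0eq, div_div_eq_mul_div, div_pow,
        div_lt_div_iff₀ (by positivity) (by positivity)]
    nlinarith [mul_pos hH0 (sub_pos.mpr hHL3)]
  have hfinal : p0 * (2 * LH) = H * Real.log 2 := by
    rw [hp0eq]; field_simp
  linarith [le_trans hbound hmono]

/-- Conditional Shannon entropy `H(U | R)` (in bits) of a `Bool`-valued random
variable `U` given a random variable `R` with values in a countable space `Z`,
defined as `- ∑_{z,u} Pr(U = u, R = z) · log₂( Pr(U = u, R = z) / Pr(R = z) )`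
(terms with zero probability contribute `0`). -/
noncomputable def condEnt2 {Ω Z : Type*} [MeasurableSpace Ω]
    (μ : Measure Ω) (U : Ω → Bool) (R : Ω → Z) : ℝ :=
  - ∑' (z : Z), ∑' (u : Bool),
      (μ {ω | U ω = u ∧ R ω = z}).toReal *
        Real.logb 2 ((μ {ω | U ω = u ∧ R ω = z}).toReal / (μ {ω | R ω = z}).toReal)

/-- **Theorem 3.1 (guaranteed privacy leakage against membership inference attacks).**
If `(U, R)` are jointly distributed with `U ∈ {0,1}`, `R` valued in a countable
space `Z`, and `H(U | R) > 0` (in bits), then any inference function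
`A : Z → {0,1}` satisfies
`Pr(A(R) = U) ≤ 1 − H(U | R) / (2 · log₂(6 / H(U | R)))`. -/
theorem membership_inference_accuracy_bound
    {Ω Z : Type*} [MeasurableSpace Ω] [MeasurableSpace Z]
    [Countable Z] [MeasurableSingletonClass Z]
    (μ : Measure Ω) [IsProbabilityMeasure μ]
    (U : Ω → Bool) (R : Ω → Z)
    (hU : Measurable U) (hR : Measurable R)
    (hH : 0 < condEnt2 μ U R) :
    ∀ A : Z → Bool,
      (μ {ω | A (R ω) = U ω}).toReal ≤
        1 - condEnt2 μ U R / (2 * Real.logb 2 (6 / condEnt2 μ U R)) := by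
  intro A
  have l2 : (0:ℝ) < Real.log 2 := Real.log_pos (by norm_num)
  set H := condEnt2 μ U R with hHdef
  set P : Z → Bool → ℝ := fun z u => (μ {ω | U ω = u ∧ R ω = z}).toReal with hPdef
  set Q : Z → ℝ := fun z => (μ {ω | R ω = z}).toReal with hQdef
  -- measurability
  have msUR : ∀ (u : Bool) (z : Z), MeasurableSet {ω | U ω = u ∧ R ω = z} := by
    intro u z
    have h : {ω | U ω = u ∧ R ω = z} = U ⁻¹' {u} ∩ R ⁻¹' {z} := by ext ω; simp
    rw [h]
    exact (hU (measurableSet_singleton u)).inter (hR (measurableSet_singleton z))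
  have msR : ∀ z : Z, MeasurableSet {ω | R ω = z} := by
    intro z
    have h : {ω | R ω = z} = R ⁻¹' {z} := by ext ω; simp
    rw [h]; exact hR (measurableSet_singleton z)
  -- splitting the measure of {R = z}
  have hsplit : ∀ z, μ {ω | R ω = z} =
      μ {ω | U ω = true ∧ R ω = z} + μ {ω | U ω = false ∧ R ω = z} := by
    intro z
    rw [← measure_union ?_ (msUR false z)]
    · congr 1; ext ω
      by_cases h : U ω <;> simp [h]
    · rw [Set.disjoint_left]
      rintro ω ⟨h1, -⟩ ⟨h2, -⟩
      rw [h1] at h2; exact Bool.noConfusion h2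
  have hsum_gen : ∀ g : Z → Bool,
      ∑' z, μ {ω | U ω = g z ∧ R ω = z} = μ {ω | U ω = g (R ω)} := by
    intro g
    rw [← measure_iUnion ?_ (fun z => msUR (g z) z)]
    · congr 1; ext ω
      simp only [Set.mem_iUnion, Set.mem_setOf_eq]
      constructor
      · rintro ⟨z, h1, rfl⟩; exact h1
      · intro h; exact ⟨R ω, h, rfl⟩
    · intro z z' hzz
      simp only [Function.onFun, Set.disjoint_left]
      rintro ω ⟨-, rfl⟩ ⟨-, h⟩
      exact hzz h
  have hSQ : ∑' z, μ {ω | R ω = z} = 1 := by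
    rw [← measure_iUnion ?_ msR]
    · have h : ⋃ z, {ω | R ω = z} = Set.univ := by ext ω; simp
      rw [h, measure_univ]
    · intro z z' hzz
      simp only [Function.onFun, Set.disjoint_left]
      rintro ω rfl h
      exact hzz h
  -- real-valued sums
  have hQ1 : ∑' z, Q z = 1 := by
    rw [hQdef, ← ENNReal.tsum_toReal_eq (fun z => measure_ne_top μ _), hSQ]
    simp
  have hQs : Summable Q := by
    rw [hQdef]
    exact ENNReal.summable_toReal (by rw [hSQ]; exact ENNReal.one_ne_top)
  -- error probability
  set Ac := (μ {ω | A (R ω) = U ω}).toReal with hAcdef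
  set Er := (μ ({ω | A (R ω) = U ω}ᶜ)).toReal with hErdef
  have hcomplset : {ω | U ω = !(A (R ω))} = {ω | A (R ω) = U ω}ᶜ := by
    ext ω
    simp only [Set.mem_setOf_eq, Set.mem_compl_iff]
    cases hu : U ω <;> cases ha : A (R ω) <;> simp [hu, ha]
  have haccset : {ω | U ω = A (R ω)} = {ω | A (R ω) = U ω} := by
    ext ω; simp only [Set.mem_setOf_eq]; exact eq_comm
  have msAcc : MeasurableSet {ω | A (R ω) = U ω} := by
    rw [← haccset]
    have h : {ω | U ω = A (R ω)} = ⋃ z, {ω | U ω = A z ∧ R ω = z} := by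
      ext ω
      simp only [Set.mem_iUnion, Set.mem_setOf_eq]
      constructor
      · intro h; exact ⟨R ω, h, rfl⟩
      · rintro ⟨z, h1, rfl⟩; exact h1
    rw [h]
    exact MeasurableSet.iUnion fun z => msUR _ _
  have hAcEr : Ac + Er = 1 := by
    rw [hAcdef, hErdef, ← ENNReal.toReal_add (measure_ne_top μ _) (measure_ne_top μ _),
      measure_add_measure_compl msAcc]
    simp
  have hErB : ∑' z, P z (!(A z)) = Er := by
    rw [hPdef, hErdef, ← ENNReal.tsum_toReal_eq (fun z => measure_ne_top μ _)]
    congr 1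
    rw [hsum_gen (fun z => !(A z)), ← hcomplset]
  have hBs : Summable (fun z => P z (!(A z))) := by
    rw [hPdef]
    exact ENNReal.summable_toReal
      (by rw [hsum_gen (fun z => !(A z))]; exact measure_ne_top μ _)
  have hAcA : ∑' z, P z (A z) = Ac := by
    rw [hPdef, hAcdef, ← ENNReal.tsum_toReal_eq (fun z => measure_ne_top μ _)]
    congr 1
    rw [hsum_gen A, haccset]
  have hAs : Summable (fun z => P z (A z)) := by
    rw [hPdef]
    exact ENNReal.summable_toReal
      (by rw [hsum_gen A]; exact measure_ne_top μ _)
  -- basic facts about P, Q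
  have hPnn : ∀ z u, 0 ≤ P z u := fun z u => ENNReal.toReal_nonneg
  have hq_eq : ∀ z, Q z = P z true + P z false := by
    intro z
    rw [hQdef, hPdef]
    simp only
    rw [hsplit z, ENNReal.toReal_add (measure_ne_top μ _) (measure_ne_top μ _)]
  have hq_ab : ∀ z, Q z = P z (A z) + P z (!(A z)) := by
    intro z
    cases hA : A z <;> simp only [hA, Bool.not_false, Bool.not_true] <;>
      rw [hq_eq z] <;> ring
  have hPle : ∀ z u, P z u ≤ Q z := by
    intro z u
    have := hq_eq z
    cases u <;> [linarith [hPnn z true]; linarith [hPnn z false]]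
  -- the per-point entropy term (natural log)
  set T : Z → ℝ := fun z =>
    -(P z true * Real.log (P z true / Q z) + P z false * Real.log (P z false / Q z))
    with hTdef
  have hHT : H = (∑' z, T z) / Real.log 2 := by
    have hc : condEnt2 μ U R =
        - ∑' z, ∑' u : Bool, P z u * Real.logb 2 (P z u / Q z) := rfl
    rw [hHdef, hc]
    have hinner : ∀ z, (∑' u : Bool, P z u * Real.logb 2 (P z u / Q z))
        = -T z / Real.log 2 := by
      intro z
      rw [tsum_bool]
      simp only [hTdef, Real.logb]
      ring
    rw [tsum_congr hinner, tsum_div_const, tsum_neg]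
    ring
  have hTnn : ∀ z, 0 ≤ T z := by
    intro z
    have h1 : ∀ u, P z u * Real.log (P z u / Q z) ≤ 0 := by
      intro u
      rcases eq_or_lt_of_le (hPnn z u) with h | h
      · rw [← h]; simp
      · have hQpos : 0 < Q z := lt_of_lt_of_le h (hPle z u)
        have hlog : Real.log (P z u / Q z) ≤ 0 :=
          Real.log_nonpos (by positivity) ((div_le_one hQpos).mpr (hPle z u))
        exact mul_nonpos_of_nonneg_of_nonpos (le_of_lt h) hlog
    simp only [hTdef]
    have := h1 true
    have := h1 false
    linarith
  -- vanishing terms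
  have hTvanish : ∀ z (u : Bool), P z u = 0 → T z = 0 := by
    intro z u hu
    have hQz : Q z = P z (!u) := by
      cases u <;> simp only [Bool.not_false, Bool.not_true] <;>
        rw [hq_eq z] <;> simp_all <;> linarith [hq_eq z]
    have hterm : P z (!u) * Real.log (P z (!u) / Q z) = 0 := by
      rcases eq_or_ne (Q z) 0 with h0 | h0
      · rw [← hQz, h0]; simp
      · rw [← hQz, div_self h0, Real.log_one, mul_zero]
    simp only [hTdef]
    cases u
    · simp only [Bool.not_false] at hterm
      rw [hu, hterm]; simp
    · simp only [Bool.not_true] at hterm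
      rw [hu, hterm]; simp
  have hEr0 : 0 ≤ Er := ENNReal.toReal_nonneg
  have hAc0 : 0 ≤ Ac := ENNReal.toReal_nonneg
  -- degenerate cases give H = 0, contradiction
  rcases eq_or_lt_of_le hEr0 with hErz | hErpos
  · exfalso
    have hBz : ∀ z, P z (!(A z)) = 0 := by
      intro z
      have hle := Summable.le_tsum hBs z (fun j _ => hPnn j (!(A j)))
      rw [hErB, ← hErz] at hle
      linarith [hPnn z (!(A z))]
    have hTz : ∀ z, T z = 0 := fun z => hTvanish z (!(A z)) (hBz z)
    have : H = 0 := by rw [hHT, tsum_congr hTz]; simp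
    linarith
  rcases eq_or_lt_of_le (show Er ≤ 1 by linarith) with hEro | hEr1
  · exfalso
    have hAcz : Ac = 0 := by linarith
    have hAz : ∀ z, P z (A z) = 0 := by
      intro z
      have hle := Summable.le_tsum hAs z (fun j _ => hPnn j (A j))
      rw [hAcA, hAcz] at hle
      linarith [hPnn z (A z)]
    have hTz : ∀ z, T z = 0 := fun z => hTvanish z (A z) (hAz z)
    have : H = 0 := by rw [hHT, tsum_congr hTz]; simp
    linarith
  -- main case : 0 < Er < 1
  set Hp := -(Er * Real.log Er + (1 - Er) * Real.log (1 - Er)) with hHpdef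
  set c := Real.log (1 - Er) - Real.log Er with hcdef
  have hTle : ∀ z, T z ≤ (Hp - c * Er) * Q z + c * P z (!(A z)) := by
    intro z
    have hk := perPoint (P z (A z)) (P z (!(A z))) (Q z) Er
      (hPnn z _) (hPnn z _) (hq_ab z) hErpos hEr1
    rw [← hHpdef, ← hcdef] at hk
    cases hA : A z <;>
      simp only [hA, Bool.not_false, Bool.not_true] at hk ⊢ <;>
      simp only [hTdef] <;> nlinarith [hk]
  have hRHSs : Summable (fun z => (Hp - c * Er) * Q z + c * P z (!(A z))) :=
    (hQs.mul_left _).add (hBs.mul_left _)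
  have hSummT : Summable T := Summable.of_nonneg_of_le hTnn hTle hRHSs
  have hsumle : ∑' z, T z ≤ Hp := by
    calc ∑' z, T z ≤ ∑' z, ((Hp - c * Er) * Q z + c * P z (!(A z))) :=
          Summable.tsum_le_tsum hTle hSummT hRHSs
      _ = (Hp - c * Er) * (∑' z, Q z) + c * (∑' z, P z (!(A z))) := by
          rw [Summable.tsum_add (hQs.mul_left _) (hBs.mul_left _), tsum_mul_left, tsum_mul_left]
      _ = Hp := by rw [hQ1, hErB]; ring
  have hHle : H ≤ Hp / Real.log 2 := by
    rw [hHT]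
    gcongr
  have hH1 : H ≤ 1 := by
    have h2 : Hp ≤ Real.log 2 := ent_le_log_two Er
    calc H ≤ Hp / Real.log 2 := hHle
      _ ≤ 1 := by rw [div_le_one l2]; exact h2
  have hbound : H * Real.log 2 ≤ Er * Real.log (6 / Er) := by
    have h1 : H * Real.log 2 ≤ Hp := by
      rw [← le_div_iff₀ l2]; exact hHle
    exact le_trans h1 (ent_le_mul Er hErpos hEr1)
  have hinv := inversion H Er hH hH1 hErpos hbound
  linarith
end

section
/- Let (U, R) be jointly distributed random variables where U takes values in {0,1} and R takes values in a countable space Z, and suppose the conditional Shannon entropy H(U | R) (in bits) is strictly positive. Then for every function A : Z → {0,1}, the probability of correct inference is bounded as Pr(A(R) = U) ≤ 1 − H(U | R) / (2 · log₂(6 / H(U | R))). -/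
open MeasureTheory Real

lemma K' (x c : ℝ) (hx : 0 ≤ x) (hc : 0 < c) : x - c ≤ x * Real.log (x / c) := by
  rcases eq_or_lt_of_le hx with h | h
  · simp [← h]; linarith
  · have h1 : Real.log (c / x) ≤ c / x - 1 := Real.log_le_sub_one_of_pos (by positivity)
    have h2 : Real.log (c / x) = - Real.log (x / c) := by
      rw [← Real.log_inv]; congr 1; field_simp
    have h3 : 1 - c / x ≤ Real.log (x / c) := by rw [h2] at h1; linarith
    have := mul_le_mul_of_nonneg_left h3 (le_of_lt h)
    calc x - c = x * (1 - c / x) := by field_simp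
    _ ≤ x * Real.log (x / c) := this

lemma logdecomp (a q s : ℝ) (ha : 0 ≤ a) (hq : 0 < q) (hs : 0 < s) :
    a * Real.log (a / (q * s)) = a * Real.log (a / q) - a * Real.log s := by
  rcases eq_or_lt_of_le ha with h | h
  · simp [← h]
  · rw [show a / (q * s) = (a / q) / s by ring, Real.log_div (by positivity) (ne_of_gt hs)]
    ring

/-- tight pointwise bound (natural log) -/
lemma L0 (a b s : ℝ) (ha : 0 ≤ a) (hb : 0 ≤ b) (hs0 : 0 < s) (hs1 : s < 1) :
    -(a * Real.log (a / (a + b)) + b * Real.log (b / (a + b))) ≤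
      a * Real.log (1 / s) + b * Real.log (1 / (1 - s)) := by
  rcases eq_or_lt_of_le (by positivity : (0:ℝ) ≤ a + b) with hq | hq
  · have ha0 : a = 0 := by linarith
    have hb0 : b = 0 := by linarith
    simp [ha0, hb0]
  · have h1 : a - (a + b) * s ≤ a * Real.log (a / ((a + b) * s)) := K' _ _ ha (by positivity)
    have h2 : b - (a + b) * (1 - s) ≤ b * Real.log (b / ((a + b) * (1 - s))) :=
      K' _ _ hb (mul_pos hq (by linarith))
    rw [logdecomp a (a+b) s ha hq hs0] at h1
    rw [logdecomp b (a+b) (1-s) hb hq (by linarith)] at h2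
    have hls : Real.log (1 / s) = - Real.log s := by rw [one_div, Real.log_inv]
    have hls' : Real.log (1 / (1 - s)) = - Real.log (1 - s) := by rw [one_div, Real.log_inv]
    rw [hls, hls']
    nlinarith [h1, h2]

/-- logb 2 version -/
lemma Lb (a b s : ℝ) (ha : 0 ≤ a) (hb : 0 ≤ b) (hs0 : 0 < s) (hs1 : s < 1) :
    -(a * Real.logb 2 (a / (a + b)) + b * Real.logb 2 (b / (a + b))) ≤
      a * Real.logb 2 (1 / s) + b * Real.logb 2 (1 / (1 - s)) := by
  have h2 : (0:ℝ) < Real.log 2 := Real.log_pos one_lt_two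
  have h := L0 a b s ha hb hs0 hs1
  simp only [Real.logb]
  rw [← sub_nonneg]
  have : a * (Real.log (1 / s) / Real.log 2) + b * (Real.log (1 / (1 - s)) / Real.log 2) -
      (-(a * (Real.log (a / (a + b)) / Real.log 2) + b * (Real.log (b / (a + b)) / Real.log 2))) =
      ((a * Real.log (1 / s) + b * Real.log (1 / (1 - s))) -
        (-(a * Real.log (a / (a + b)) + b * Real.log (b / (a + b))))) / Real.log 2 := by ring
  rw [this]
  apply div_nonneg (by linarith) (le_of_lt h2)

/-- min version, ordered (false, true) = (b, a) to match tsum_bool -/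
lemma Lmin (a b s : ℝ) (ha : 0 ≤ a) (hb : 0 ≤ b) (hs0 : 0 < s) (hs1 : s < 1) :
    -(b * Real.logb 2 (b / (a + b)) + a * Real.logb 2 (a / (a + b))) ≤
      min a b * Real.logb 2 (1 / s) + (a + b - min a b) * Real.logb 2 (1 / (1 - s)) := by
  rcases le_total a b with hab | hab
  · rw [min_eq_left hab]
    have := Lb a b s ha hb hs0 hs1
    have hb' : a + b - a = b := by ring
    rw [hb']; linarith
  · rw [min_eq_right hab]
    have := Lb b a s hb ha hs0 hs1
    rw [add_comm b a] at this
    have ha' : a + b - b = a := by ring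
    rw [ha']; linarith


lemma log_six_lb : (1.7196 : ℝ) ≤ Real.log 6 := by
  have h2 : (0.6931471803 : ℝ) < Real.log 2 := Real.log_two_gt_d9
  have h32 : (1/3 : ℝ) ≤ Real.log (3/2) := by
    have := Real.log_le_sub_one_of_pos (show (0:ℝ) < 2/3 by norm_num)
    have he : Real.log ((3:ℝ)/2) = - Real.log (2/3) := by
      rw [← Real.log_inv]; norm_num
    rw [he]; linarith
  have h6 : Real.log 6 = Real.log 2 + (Real.log 2 + Real.log (3/2)) := by
    rw [← Real.log_mul (by norm_num) (by norm_num), ← Real.log_mul (by norm_num) (by norm_num)]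
    norm_num
  rw [h6]; linarith

lemma numeric_core (H : ℝ) (hH0 : 0 < H) (hH1 : H ≤ 1) :
    0 < H / (2 * Real.logb 2 (6 / H)) ∧ H / (2 * Real.logb 2 (6 / H)) ≤ 1/4 ∧
    (H / (2 * Real.logb 2 (6 / H))) * Real.logb 2 (1 / (H / (2 * Real.logb 2 (6 / H)))) +
      Real.logb 2 (1 / (1 - H / (2 * Real.logb 2 (6 / H)))) ≤ H := by
  have hlog2 : (0.6931471803 : ℝ) < Real.log 2 := Real.log_two_gt_d9
  have hlog2' : Real.log 2 < 0.6931471808 := Real.log_two_lt_d9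
  set l := Real.log (6 / H) with hl
  have hl6 : Real.log 6 ≤ l := by
    apply Real.log_le_log (by norm_num)
    rw [le_div_iff₀ hH0]; nlinarith
  have hlpos : (1.7196 : ℝ) ≤ l := le_trans log_six_lb hl6
  have hlogb : Real.logb 2 (6 / H) = l / Real.log 2 := rfl
  set p := H / (2 * Real.logb 2 (6 / H)) with hp
  have hpeq : p = H * Real.log 2 / (2 * l) := by
    rw [hp, hlogb]; field_simp
  have hp0 : 0 < p := by rw [hpeq]; positivity
  have hp4 : p ≤ 1/4 := by
    rw [hpeq, div_le_iff₀ (by nlinarith)]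
    nlinarith
  -- log p decomposition
  have hlogp : Real.log p = Real.log H + Real.log (Real.log 2) - Real.log 2 - Real.log l := by
    rw [hpeq, Real.log_div (by positivity) (by positivity),
        Real.log_mul (ne_of_gt hH0) (by positivity),
        Real.log_mul (by norm_num) (by positivity)]
    ring
  have hll : Real.log l ≤ l - 1 := Real.log_le_sub_one_of_pos (by linarith)
  have hleq : l = Real.log 6 - Real.log H := by
    rw [hl, Real.log_div (by norm_num) (ne_of_gt hH0)]
  have hlogH : Real.log H ≤ 0 := Real.log_nonpos (le_of_lt hH0) hH1
  have hloglog2 : 1 - 1 / Real.log 2 ≤ Real.log (Real.log 2) := by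
    have := Real.log_le_sub_one_of_pos (show (0:ℝ) < 1 / Real.log 2 by positivity)
    have he : Real.log (1 / Real.log 2) = - Real.log (Real.log 2) := by
      rw [one_div, Real.log_inv]
    rw [he] at this; linarith
  -- h2 : -log p + 4/3 ≤ 2 l
  have hkey : -Real.log p + 4/3 ≤ 2 * l := by
    rw [hlogp]
    have hinv : 1 / Real.log 2 ≤ 1 / 0.6931471803 := by
      apply div_le_div_of_nonneg_left (by norm_num) (by norm_num) (by linarith)
    have h6 : (1.7196 : ℝ) ≤ Real.log 6 := log_six_lb
    nlinarith
  -- h1 : -log(1-p) ≤ (4/3) p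
  have h1mp : (0:ℝ) < 1 - p := by linarith
  have hlog1p : -Real.log (1 - p) ≤ (4/3) * p := by
    have := Real.log_le_sub_one_of_pos (show (0:ℝ) < (1 - p)⁻¹ by positivity)
    rw [Real.log_inv] at this
    have hfrac : (1 - p)⁻¹ - 1 = p / (1 - p) := by field_simp; ring
    have : -Real.log (1 - p) ≤ p / (1 - p) := by rw [hfrac] at this; linarith
    have h2 : p / (1 - p) ≤ (4/3) * p := by
      rw [div_le_iff₀ h1mp]; nlinarith
    linarith
  -- core in nats
  have h2pl : 2 * p * l = H * Real.log 2 := by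
    rw [hpeq]; field_simp
  have hnat : p * (-Real.log p) + (-Real.log (1 - p)) ≤ H * Real.log 2 := by
    have : p * (-Real.log p) ≤ p * (2 * l - 4/3) :=
      mul_le_mul_of_nonneg_left (by linarith) (le_of_lt hp0)
    nlinarith
  refine ⟨hp0, hp4, ?_⟩
  have e1 : Real.logb 2 (1 / p) = (-Real.log p) / Real.log 2 := by
    rw [Real.logb, one_div, Real.log_inv]
  have e2 : Real.logb 2 (1 / (1 - p)) = (-Real.log (1 - p)) / Real.log 2 := by
    rw [Real.logb, one_div, Real.log_inv]
  rw [e1, e2, show p * (-Real.log p / Real.log 2) + -Real.log (1 - p) / Real.log 2 =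
    (p * (-Real.log p) + -Real.log (1 - p)) / Real.log 2 by ring,
    div_le_iff₀ (by linarith : (0:ℝ) < Real.log 2)]
  linarith [hnat]

lemma fano_main {Z : Type*} (a b c : Z → ℝ)
    (ha : ∀ z, 0 ≤ a z) (hb : ∀ z, 0 ≤ b z)
    (hSa : Summable a) (hSb : Summable b)
    (hsum1 : ∑' z, (a z + b z) = 1)
    (hc : ∀ z, c z = a z ∨ c z = b z)
    (hH : 0 < -∑' z, (b z * Real.logb 2 (b z / (a z + b z)) +
        a z * Real.logb 2 (a z / (a z + b z)))) :
    ∑' z, c z ≤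
      1 - (-∑' z, (b z * Real.logb 2 (b z / (a z + b z)) +
            a z * Real.logb 2 (a z / (a z + b z)))) /
        (2 * Real.logb 2 (6 / (-∑' z, (b z * Real.logb 2 (b z / (a z + b z)) +
            a z * Real.logb 2 (a z / (a z + b z)))))) := by
  classical
  set T : Z → ℝ := fun z => b z * Real.logb 2 (b z / (a z + b z)) +
      a z * Real.logb 2 (a z / (a z + b z)) with hTdef
  set H : ℝ := -∑' z, T z with hHdef
  by_cases hTs : Summable T
  swap
  · exfalso; rw [hHdef, tsum_eq_zero_of_not_summable hTs] at hH; simp at hH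
  set q : Z → ℝ := fun z => a z + b z with hqdef
  set d : Z → ℝ := fun z => min (a z) (b z) with hddef
  have hq0 : ∀ z, 0 ≤ q z := fun z => add_nonneg (ha z) (hb z)
  have hd0 : ∀ z, 0 ≤ d z := fun z => le_min (ha z) (hb z)
  have hSq : Summable q := hSa.add hSb
  have hSd : Summable d := Summable.of_nonneg_of_le hd0 (fun z => min_le_left _ _) hSa
  have hSc : Summable c := by
    refine Summable.of_nonneg_of_le ?_ ?_ hSq
    · intro z; rcases hc z with h | h <;> rw [h]; exacts [ha z, hb z]
    · intro z; rcases hc z with h | h <;> rw [h, hqdef]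
      · simpa using hb z
      · simpa using ha z
  have hsumq : ∑' z, q z = 1 := hsum1
  set P : ℝ := ∑' z, d z with hPdef
  have hP0 : 0 ≤ P := tsum_nonneg hd0
  have hkey : ∀ s : ℝ, 0 < s → s < 1 →
      H ≤ P * Real.logb 2 (1 / s) + (1 - P) * Real.logb 2 (1 / (1 - s)) := by
    intro s hs0 hs1
    have hpt : ∀ z, -T z ≤ d z * Real.logb 2 (1 / s) + (q z - d z) * Real.logb 2 (1 / (1 - s)) :=
      fun z => Lmin (a z) (b z) s (ha z) (hb z) hs0 hs1
    have hSbound : Summable (fun z => d z * Real.logb 2 (1 / s) +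
        (q z - d z) * Real.logb 2 (1 / (1 - s))) :=
      (hSd.mul_right _).add ((hSq.sub hSd).mul_right _)
    have h1 : ∑' z, -T z ≤ ∑' z, (d z * Real.logb 2 (1 / s) +
        (q z - d z) * Real.logb 2 (1 / (1 - s))) := Summable.tsum_le_tsum hpt hTs.neg hSbound
    rw [tsum_neg] at h1
    rw [Summable.tsum_add (hSd.mul_right _) ((hSq.sub hSd).mul_right _), tsum_mul_right,
      tsum_mul_right, Summable.tsum_sub hSq hSd, hsumq] at h1
    rw [hHdef]
    exact h1
  have hH1 : H ≤ 1 := by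
    have := hkey (1/2) (by norm_num) (by norm_num)
    norm_num at this
    linarith
  obtain ⟨hp0, hp4, hnum⟩ := numeric_core H hH hH1
  set p : ℝ := H / (2 * Real.logb 2 (6 / H)) with hpdef
  have hp1 : p < 1 := by linarith
  have hC1 : 0 < Real.logb 2 (1 / p) := by
    apply Real.logb_pos one_lt_two
    rw [lt_div_iff₀ hp0]; linarith
  have hC2 : 0 ≤ Real.logb 2 (1 / (1 - p)) := by
    apply Real.logb_nonneg one_lt_two
    rw [le_div_iff₀ (by linarith)]; linarith
  have hPp : p ≤ P := by
    have hk := hkey p hp0 hp1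
    nlinarith [hk, hnum, hC1, hC2, hP0]
  have hfin : ∑' z, c z ≤ 1 - P := by
    have hpt : ∀ z, c z ≤ q z - d z := by
      intro z
      rcases hc z with h | h <;> rw [h, hqdef, hddef] <;> simp only <;>
        [linarith [min_le_right (a z) (b z)]; linarith [min_le_left (a z) (b z)]]
    have := Summable.tsum_le_tsum hpt hSc (hSq.sub hSd)
    rwa [Summable.tsum_sub hSq hSd, hsumq] at this
  linarith


/-- **Theorem 3.2 (guaranteed privacy leakage against property inference attacks).**
If `(U, R)` are jointly distributed with the private binary dataset property
`U ∈ {0,1}` and the (aggregated) dataset representation `R` valued in a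
countable space `Z`, and `H(U | R) > 0` (in bits), then any property-inference
function `A : Z → {0,1}` satisfies
`Pr(A(R) = U) ≤ 1 − H(U | R) / (2 · log₂(6 / H(U | R)))`. -/
theorem property_inference_accuracy_bound
    {Ω Z : Type*} [MeasurableSpace Ω] [MeasurableSpace Z]
    [Countable Z] [MeasurableSingletonClass Z]
    (μ : Measure Ω) [IsProbabilityMeasure μ]
    (U : Ω → Bool) (R : Ω → Z)
    (hU : Measurable U) (hR : Measurable R)
    (hH : 0 < condEnt2 μ U R) :
    ∀ A : Z → Bool,
      (μ {ω | A (R ω) = U ω}).toReal ≤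
        1 - condEnt2 μ U R / (2 * Real.logb 2 (6 / condEnt2 μ U R)) := by
  intro A
  classical
  have hmRz : ∀ z : Z, MeasurableSet {ω | R ω = z} := fun z => hR (measurableSet_singleton z)
  have hmU : ∀ u : Bool, MeasurableSet {ω | U ω = u} := fun u => hU (measurableSet_singleton u)
  have hmUz : ∀ (u : Bool) (z : Z), MeasurableSet {ω | U ω = u ∧ R ω = z} :=
    fun u z => (hmU u).inter (hmRz z)
  set a : Z → ℝ := fun z => (μ {ω | U ω = true ∧ R ω = z}).toReal with hadef
  set b : Z → ℝ := fun z => (μ {ω | U ω = false ∧ R ω = z}).toReal with hbdef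
  set c : Z → ℝ := fun z => (μ ({ω | A (R ω) = U ω} ∩ {ω | R ω = z})).toReal with hcdef
  have hsplitE : ∀ z, μ {ω | R ω = z} =
      μ {ω | U ω = true ∧ R ω = z} + μ {ω | U ω = false ∧ R ω = z} := by
    intro z
    have hU2 : {ω | R ω = z} = {ω | U ω = true ∧ R ω = z} ∪ {ω | U ω = false ∧ R ω = z} := by
      ext ω; simp only [Set.mem_setOf_eq, Set.mem_union]
      cases hu : U ω <;> tauto
    rw [hU2, measure_union ?_ (hmUz false z)]
    refine Set.disjoint_left.mpr ?_
    rintro ω ⟨h1, -⟩ ⟨h2, -⟩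
    rw [h1] at h2; exact Bool.noConfusion h2
  have hqab : ∀ z, (μ {ω | R ω = z}).toReal = a z + b z := by
    intro z
    rw [hsplitE z, ENNReal.toReal_add (measure_ne_top μ _) (measure_ne_top μ _)]
  have hcovE : ∑' z : Z, μ {ω | R ω = z} = 1 := by
    have hdis : Pairwise (Function.onFun Disjoint fun z : Z => {ω | R ω = z}) := by
      intro z1 z2 hne
      refine Set.disjoint_left.mpr ?_
      intro ω h1 h2
      exact hne ((show R ω = z1 from h1).symm.trans (show R ω = z2 from h2))
    have hiu := MeasureTheory.measure_iUnion (μ := μ) hdis (fun z => hmRz z)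
    have huniv : (⋃ z : Z, {ω | R ω = z}) = Set.univ := by
      ext ω; simp [Set.mem_iUnion]
    rw [huniv, measure_univ] at hiu
    exact hiu.symm
  have hsum1 : ∑' z, (a z + b z) = 1 := by
    calc ∑' z, (a z + b z) = ∑' z, (μ {ω | R ω = z}).toReal :=
          tsum_congr (fun z => (hqab z).symm)
    _ = (∑' z, μ {ω | R ω = z}).toReal :=
          (ENNReal.tsum_toReal_eq (fun z => measure_ne_top μ _)).symm
    _ = 1 := by rw [hcovE]; rfl
  have hSa : Summable a := by
    apply ENNReal.summable_toReal
    have hle : ∑' z, μ {ω | U ω = true ∧ R ω = z} ≤ ∑' z : Z, μ {ω | R ω = z} :=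
      ENNReal.tsum_le_tsum (fun z => measure_mono (fun ω h => h.2))
    rw [hcovE] at hle
    exact ne_top_of_le_ne_top ENNReal.one_ne_top hle
  have hSb : Summable b := by
    apply ENNReal.summable_toReal
    have hle : ∑' z, μ {ω | U ω = false ∧ R ω = z} ≤ ∑' z : Z, μ {ω | R ω = z} :=
      ENNReal.tsum_le_tsum (fun z => measure_mono (fun ω h => h.2))
    rw [hcovE] at hle
    exact ne_top_of_le_ne_top ENNReal.one_ne_top hle
  have ha0 : ∀ z, 0 ≤ a z := fun z => ENNReal.toReal_nonneg
  have hb0 : ∀ z, 0 ≤ b z := fun z => ENNReal.toReal_nonneg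
  have hcab : ∀ z, c z = a z ∨ c z = b z := by
    intro z
    cases hA : A z
    · right
      have hseq : {ω | A (R ω) = U ω} ∩ {ω | R ω = z} = {ω | U ω = false ∧ R ω = z} := by
        ext ω
        simp only [Set.mem_inter_iff, Set.mem_setOf_eq]
        constructor
        · rintro ⟨h1, h2⟩
          rw [h2, hA] at h1
          exact ⟨h1.symm, h2⟩
        · rintro ⟨h1, h2⟩
          exact ⟨by rw [h2, hA, h1], h2⟩
      simp only [hcdef, hbdef, hseq]
    · left
      have hseq : {ω | A (R ω) = U ω} ∩ {ω | R ω = z} = {ω | U ω = true ∧ R ω = z} := by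
        ext ω
        simp only [Set.mem_inter_iff, Set.mem_setOf_eq]
        constructor
        · rintro ⟨h1, h2⟩
          rw [h2, hA] at h1
          exact ⟨h1.symm, h2⟩
        · rintro ⟨h1, h2⟩
          exact ⟨by rw [h2, hA, h1], h2⟩
      simp only [hcdef, hadef, hseq]
  have hcorr : (μ {ω | A (R ω) = U ω}).toReal = ∑' z, c z := by
    have hmS : MeasurableSet {ω | A (R ω) = U ω} :=
      measurableSet_eq_fun ((measurable_of_countable A).comp hR) hU
    have hdis : Pairwise (Function.onFun Disjoint fun z : Z => {ω | A (R ω) = U ω} ∩ {ω | R ω = z}) := by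
      intro z1 z2 hne
      refine Set.disjoint_left.mpr ?_
      rintro ω ⟨-, h1⟩ ⟨-, h2⟩
      exact hne ((show R ω = z1 from h1).symm.trans (show R ω = z2 from h2))
    have hiu := MeasureTheory.measure_iUnion (μ := μ) hdis
      (fun z => hmS.inter (hmRz z))
    have huniv : (⋃ z : Z, {ω | A (R ω) = U ω} ∩ {ω | R ω = z}) = {ω | A (R ω) = U ω} := by
      rw [← Set.inter_iUnion]
      have huniv2 : (⋃ z : Z, {ω | R ω = z}) = Set.univ := by
        ext ω; simp [Set.mem_iUnion]
      rw [huniv2, Set.inter_univ]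
    rw [huniv] at hiu
    rw [hiu, ENNReal.tsum_toReal_eq (fun z => measure_ne_top μ _)]
  have hHeq : condEnt2 μ U R = -∑' z, (b z * Real.logb 2 (b z / (a z + b z)) +
      a z * Real.logb 2 (a z / (a z + b z))) := by
    unfold condEnt2
    congr 1
    apply tsum_congr
    intro z
    rw [tsum_bool, ← hqab z]
  rw [hcorr, hHeq]
  exact fano_main a b c ha0 hb0 hSa hSb hsum1 hcab (hHeq ▸ hH)
end

section
/- Let Z be a normed vector space and let (x, y, u) be jointly distributed random variables, where y ∈ {0,1} is the task label, u ∈ {0,1} is the private membership bit with Pr(u = 0) > 0 and Pr(u = 1) > 0, and x takes values in a data space. Let f map x to a representation f(x) ∈ Z with ‖f(x)‖ ≤ R almost surely, and let C : Z → {0,1} ⊂ ℝ be a task classifier that is C_L-Lipschitz. Define the membership adversary advantage Adv = sup over measurable A : Z → {0,1} of |Pr(A(f(x)) = 1 | u = 0) − Pr(A(f(x)) = 1 | u = 1)|, and the constant Δ_{y|u} = |Pr(y = 1 | u = 0) − Pr(y = 1 | u = 1)|. Then the utility risk satisfies Pr(y ≠ C(f(x)) | u = 0) + Pr(y ≠ C(f(x))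 | u = 1) ≥ Δ_{y|u} − 2·R·C_L·Adv. -/
open MeasureTheory ProbabilityTheory
open scoped ENNReal NNReal

private lemma abs_toReal_sub_le_of_symmDiff {Ω : Type*} [MeasurableSpace Ω] (ν : Measure Ω)
    [IsProbabilityMeasure ν] {E F G : Set Ω} (h1 : E \ F ⊆ G) (h2 : F \ E ⊆ G) :
    |(ν E).toReal - (ν F).toReal| ≤ (ν G).toReal := by
  have key : ∀ {A B : Set Ω}, A \ B ⊆ G → (ν A).toReal - (ν B).toReal ≤ (ν G).toReal := by
    intro A B h
    have hle : ν A ≤ ν B + ν G := by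
      calc ν A ≤ ν (B ∪ G) := by
            apply measure_mono
            intro x hx
            by_cases hB : x ∈ B
            · exact Or.inl hB
            · exact Or.inr (h ⟨hx, hB⟩)
        _ ≤ ν B + ν G := measure_union_le _ _
    have hB : ν B ≠ ∞ := measure_ne_top ν B
    have hG : ν G ≠ ∞ := measure_ne_top ν G
    have := ENNReal.toReal_mono (by finiteness) hle
    rw [ENNReal.toReal_add hB hG] at this
    linarith
  rw [abs_sub_le_iff]
  exact ⟨key h1, key h2⟩

/-- **Theorem B.1 (utility–privacy tradeoff against membership inference attacks).**
For a binary task label `y ∈ {0,1}`, private membership bit `u ∈ {0,1}` (both classes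
having positive probability), an encoder `f` whose representations are bounded in norm by
`R`, and a `C_L`-Lipschitz task classifier `C : Z → {0,1} ⊂ ℝ`, the utility risk
`Pr(y ≠ C(f(x)) | u=0) + Pr(y ≠ C(f(x)) | u=1)` is at least
`Δ_{y|u} − 2·R·C_L·Adv`, where
`Adv = sup_{measurable A : Z → {0,1}} |Pr(A(f(x))=1 | u=0) − Pr(A(f(x))=1 | u=1)|`
and `Δ_{y|u} = |Pr(y=1 | u=0) − Pr(y=1 | u=1)|`. -/
theorem utility_privacy_tradeoff_MIA
    {Ω Xsp Z : Type*} [MeasurableSpace Ω] [MeasurableSpace Xsp]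
    [NormedAddCommGroup Z] [NormedSpace ℝ Z] [MeasurableSpace Z] [BorelSpace Z]
    (μ : Measure Ω) [IsProbabilityMeasure μ]
    (X : Ω → Xsp) (y : Ω → ℝ) (u : Ω → Bool)
    (hX : Measurable X) (hy : Measurable y) (hu : Measurable u)
    (hy01 : ∀ ω, y ω = 0 ∨ y ω = 1)
    (hu0 : μ {ω | u ω = false} ≠ 0) (hu1 : μ {ω | u ω = true} ≠ 0)
    (f : Xsp → Z) (hf : Measurable f)
    (R : ℝ) (hR : ∀ᵐ ω ∂μ, ‖f (X ω)‖ ≤ R)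
    (C : Z → ℝ) (CL : ℝ≥0) (hC : LipschitzWith CL C)
    (hC01 : ∀ z, C z = 0 ∨ C z = 1) :
    (μ[|{ω | u ω = false}] {ω | y ω ≠ C (f (X ω))}).toReal +
      (μ[|{ω | u ω = true}] {ω | y ω ≠ C (f (X ω))}).toReal ≥
    |(μ[|{ω | u ω = false}] {ω | y ω = 1}).toReal -
      (μ[|{ω | u ω = true}] {ω | y ω = 1}).toReal| -
    2 * R * (CL : ℝ) *
      (⨆ (A : Z → Bool) (_ : Measurable A),
        |(μ[|{ω | u ω = false}] {ω | A (f (X ω)) = true}).toReal -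
         (μ[|{ω | u ω = true}] {ω | A (f (X ω)) = true}).toReal|) := by
  classical
  haveI hν0 : IsProbabilityMeasure (μ[|{ω | u ω = false}]) := cond_isProbabilityMeasure hu0
  haveI hν1 : IsProbabilityMeasure (μ[|{ω | u ω = true}]) := cond_isProbabilityMeasure hu1
  set ν0 := μ[|{ω | u ω = false}] with hν0def
  set ν1 := μ[|{ω | u ω = true}] with hν1def
  set E : Set Ω := {ω | y ω = 1} with hE
  set F : Set Ω := {ω | C (f (X ω)) = 1} with hF
  set G : Set Ω := {ω | y ω ≠ C (f (X ω))} with hG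
  -- symmetric difference inclusions
  have hEF : E \ F ⊆ G := by
    rintro ω ⟨h1, h2⟩
    simp only [hE, hF, hG, Set.mem_setOf_eq] at *
    intro h; exact h2 (h ▸ h1)
  have hFE : F \ E ⊆ G := by
    rintro ω ⟨h1, h2⟩
    simp only [hE, hF, hG, Set.mem_setOf_eq] at *
    intro h
    rcases hy01 ω with h0 | h0
    · rw [h0] at h; rw [← h] at h1; norm_num at h1
    · exact h2 h0
  have herr0 : |(ν0 E).toReal - (ν0 F).toReal| ≤ (ν0 G).toReal :=
    abs_toReal_sub_le_of_symmDiff ν0 hEF hFE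
  have herr1 : |(ν1 E).toReal - (ν1 F).toReal| ≤ (ν1 G).toReal :=
    abs_toReal_sub_le_of_symmDiff ν1 hEF hFE
  -- triangle inequality
  have htri : |(ν0 E).toReal - (ν1 E).toReal| ≤
      (ν0 G).toReal + (ν1 G).toReal + |(ν0 F).toReal - (ν1 F).toReal| := by
    have t1 : |(ν0 E).toReal - (ν1 E).toReal| ≤
        |(ν0 E).toReal - (ν0 F).toReal| + |(ν0 F).toReal - (ν1 F).toReal|
          + |(ν1 F).toReal - (ν1 E).toReal| := by
      have := abs_sub_le ((ν0 E).toReal) ((ν0 F).toReal) ((ν1 E).toReal)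
      have h2 := abs_sub_le ((ν0 F).toReal) ((ν1 F).toReal) ((ν1 E).toReal)
      linarith
    have : |(ν1 F).toReal - (ν1 E).toReal| = |(ν1 E).toReal - (ν1 F).toReal| :=
      abs_sub_comm _ _
    linarith [herr0, herr1, t1, this.ge]
  -- the adversary family
  set Φ : (Z → Bool) → ℝ := fun A => ⨆ (_ : Measurable A),
      |(ν0 {ω | A (f (X ω)) = true}).toReal - (ν1 {ω | A (f (X ω)) = true}).toReal| with hΦ
  have hΦle : ∀ A, Φ A ≤ 2 := by
    intro A
    by_cases hA : Measurable A
    · show (⨆ (_ : Measurable A),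
        |(ν0 {ω | A (f (X ω)) = true}).toReal - (ν1 {ω | A (f (X ω)) = true}).toReal|) ≤ 2
      rw [ciSup_pos hA]
      have h0 : (ν0 {ω | A (f (X ω)) = true}).toReal ≤ 1 :=
        ENNReal.toReal_le_of_le_ofReal one_pos.le (by simpa using prob_le_one)
      have h1 : (ν1 {ω | A (f (X ω)) = true}).toReal ≤ 1 :=
        ENNReal.toReal_le_of_le_ofReal one_pos.le (by simpa using prob_le_one)
      have h0' : 0 ≤ (ν0 {ω | A (f (X ω)) = true}).toReal := ENNReal.toReal_nonneg
      have h1' : 0 ≤ (ν1 {ω | A (f (X ω)) = true}).toReal := ENNReal.toReal_nonneg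
      rw [abs_sub_le_iff]; constructor <;> linarith
    · show (⨆ (_ : Measurable A),
        |(ν0 {ω | A (f (X ω)) = true}).toReal - (ν1 {ω | A (f (X ω)) = true}).toReal|) ≤ 2
      haveI : IsEmpty (Measurable A) := ⟨hA⟩
      rw [Real.iSup_of_isEmpty]; norm_num
  have hΦnonneg : ∀ A, 0 ≤ Φ A := by
    intro A
    by_cases hA : Measurable A
    · show (0:ℝ) ≤ ⨆ (_ : Measurable A),
        |(ν0 {ω | A (f (X ω)) = true}).toReal - (ν1 {ω | A (f (X ω)) = true}).toReal|
      rw [ciSup_pos hA]; exact abs_nonneg _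
    · show (0:ℝ) ≤ ⨆ (_ : Measurable A),
        |(ν0 {ω | A (f (X ω)) = true}).toReal - (ν1 {ω | A (f (X ω)) = true}).toReal|
      haveI : IsEmpty (Measurable A) := ⟨hA⟩
      rw [Real.iSup_of_isEmpty]
  have hbdd : BddAbove (Set.range Φ) := by
    refine ⟨2, ?_⟩
    rintro x ⟨A, rfl⟩
    exact hΦle A
  have hAdvnonneg : 0 ≤ ⨆ A, Φ A :=
    le_ciSup_of_le hbdd (fun _ => false) (hΦnonneg _)
  -- the key attack: A0 z = decide (C z = 1)
  have hCmeas : Measurable C := hC.continuous.measurable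
  have hsF : MeasurableSet {z : Z | C z = 1} := hCmeas (measurableSet_singleton 1)
  set A0 : Z → Bool := fun z => if C z = 1 then true else false with hA0def
  have hA0 : Measurable A0 := by
    apply measurable_to_countable'
    intro b
    cases b
    · convert hsF.compl using 1
      ext z; simp [hA0def]
    · convert hsF using 1
      ext z; simp [hA0def]
  have hA0F : {ω | A0 (f (X ω)) = true} = F := by
    ext ω; simp [hA0def, hF]
  have hDAdv : |(ν0 F).toReal - (ν1 F).toReal| ≤ ⨆ A, Φ A := by
    refine le_ciSup_of_le hbdd A0 ?_
    show |(ν0 F).toReal - (ν1 F).toReal| ≤ ⨆ (_ : Measurable A0),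
      |(ν0 {ω | A0 (f (X ω)) = true}).toReal - (ν1 {ω | A0 (f (X ω)) = true}).toReal|
    rw [ciSup_pos hA0, hA0F]
  -- R is nonnegative
  haveI : (ae μ).NeBot := ae_neBot.mpr (IsProbabilityMeasure.ne_zero μ)
  obtain ⟨ω₀, hω₀⟩ := hR.exists
  have hR0 : 0 ≤ R := le_trans (norm_nonneg _) hω₀
  -- it now suffices to bound the classifier gap
  have main : |(ν0 F).toReal - (ν1 F).toReal| ≤ 2 * R * (CL : ℝ) * ⨆ A, Φ A := by
    by_cases hcase : (1 : ℝ) ≤ 2 * R * (CL : ℝ)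
    · calc |(ν0 F).toReal - (ν1 F).toReal| ≤ ⨆ A, Φ A := hDAdv
        _ ≤ 2 * R * (CL : ℝ) * ⨆ A, Φ A := le_mul_of_one_le_left hAdvnonneg hcase
    · push_neg at hcase
      -- C is constant on the ball of radius R
      have hconst : ∀ z z', ‖z‖ ≤ R → ‖z'‖ ≤ R → C z = C z' := by
        intro z z' hz hz'
        by_contra hne
        have habs : |C z - C z'| = 1 := by
          rcases hC01 z with h | h <;> rcases hC01 z' with h' | h' <;>
            rw [h, h'] at hne ⊢ <;> simp_all
        have hdist : dist (C z) (C z') ≤ (CL : ℝ) * dist z z' := hC.dist_le_mul z z'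
        rw [Real.dist_eq, habs] at hdist
        have hzz : dist z z' ≤ 2 * R := by
          rw [dist_eq_norm]
          calc ‖z - z'‖ ≤ ‖z‖ + ‖z'‖ := norm_sub_le _ _
            _ ≤ 2 * R := by linarith
        have : (1 : ℝ) ≤ (CL : ℝ) * (2 * R) :=
          le_trans hdist (mul_le_mul_of_nonneg_left hzz CL.coe_nonneg)
        nlinarith
      -- so F is essentially trivial under both conditional measures
      set S : Set Ω := {ω | ‖f (X ω)‖ ≤ R} with hS
      have hμS : μ Sᶜ = 0 := by
        rw [hS]; simpa [Set.compl_setOf] using (ae_iff.mp hR)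
      have hν0S : ν0 Sᶜ = 0 := cond_absolutelyContinuous hμS
      have hν1S : ν1 Sᶜ = 0 := cond_absolutelyContinuous hμS
      have hFmeas : MeasurableSet F :=
        (hCmeas.comp (hf.comp hX)) (measurableSet_singleton 1)
      have hDzero : (ν0 F).toReal = (ν1 F).toReal := by
        by_cases hex : ∃ z, ‖z‖ ≤ R ∧ C z = 1
        · obtain ⟨z0, hz0, hz01⟩ := hex
          have hSF : S ⊆ F := by
            intro ω hω
            have : C (f (X ω)) = C z0 := hconst _ _ hω hz0
            simpa [hF, hz01] using this
          have hFc : ∀ (ν : Measure Ω), ν Sᶜ = 0 → ν Fᶜ = 0 := by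
            intro ν hνS
            exact measure_mono_null (Set.compl_subset_compl.mpr hSF) hνS
          have h0 : ν0 F = 1 := by
            have := measure_compl hFmeas (measure_ne_top ν0 F)
            rw [hFc ν0 hν0S] at this
            have h1 : ν0 Set.univ = 1 := measure_univ
            rw [h1] at this
            have := tsub_eq_zero_iff_le.mp this.symm
            exact le_antisymm prob_le_one this
          have h1 : ν1 F = 1 := by
            have := measure_compl hFmeas (measure_ne_top ν1 F)
            rw [hFc ν1 hν1S] at this
            have h1 : ν1 Set.univ = 1 := measure_univ
            rw [h1] at this
            have := tsub_eq_zero_iff_le.mp this.symm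
            exact le_antisymm prob_le_one this
          rw [h0, h1]
        · push_neg at hex
          have hFS : F ⊆ Sᶜ := by
            intro ω hω hωS
            exact hex (f (X ω)) hωS hω
          have h0 : ν0 F = 0 := measure_mono_null hFS hν0S
          have h1 : ν1 F = 0 := measure_mono_null hFS hν1S
          rw [h0, h1]
      have hprod : 0 ≤ 2 * R * (CL : ℝ) * ⨆ A, Φ A := by
        have : (0:ℝ) ≤ 2 * R * (CL : ℝ) := by positivity
        exact mul_nonneg this hAdvnonneg
      rw [hDzero]; simpa using hprod
  -- combine
  have final : |(ν0 E).toReal - (ν1 E).toReal| ≤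
      (ν0 G).toReal + (ν1 G).toReal + 2 * R * (CL : ℝ) * ⨆ A, Φ A := by
    linarith
  rw [ge_iff_le, sub_le_iff_le_add]
  linarith
end
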